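/- For every integer n ≥ 1, the infinite product h_n(s) = ∏_p (1 + ∑_{m=1}^{2^n−1} 1/(p^{ms+m+1}(1+1/p)) − 1/(p^{2^n s + 2^n}(1+1/p))) converges absolutely for every complex s with Re s > −1 + 2^{−n}. -/

import Mathlib

open Complex

/-- The Euler factor of `h_n` at prime `p`. -/
noncomputable def hFactor (n : ℕ) (s : ℂ) (p : Nat.Primes) : ℂ :=
  1 + ∑ m ∈ Finset.Icc 1 (2 ^ n - 1 : ℕ),
        1 / ((p : ℂ) ^ ((m : ℂ) * s + (m : ℂ) + 1) * (1 + 1 / (p : ℂ)))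
    - 1 / ((p : ℂ) ^ ((2 : ℂ) ^ n * s + (2 : ℂ) ^ n) * (1 + 1 / (p : ℂ)))


lemma hasProd_zero_of_exists_eq_zero' {ι : Type*} {f : ι → ℂ} (h : ∃ i, f i = 0) :
    HasProd f 0 := by
  obtain ⟨i, hi⟩ := h
  rw [HasProd]
  apply Filter.Tendsto.congr' (f₁ := fun _ => (0 : ℂ))
  · filter_upwards [Filter.eventually_ge_atTop {i}] with s hs
    exact (Finset.prod_eq_zero (hs (Finset.mem_singleton_self i)) hi).symm
  · exact tendsto_const_nhds

lemma multipliable_of_summable_norm_sub_one {ι : Type*} {f : ι → ℂ}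
    (h : Summable fun i => ‖f i - 1‖) : Multipliable f := by
  by_cases h0 : ∃ i, f i = 0
  · exact ⟨0, hasProd_zero_of_exists_eq_zero' h0⟩
  · push_neg at h0
    exact Complex.multipliable_of_summable_log (f := f)
      (by
        apply Summable.of_norm_bounded_eventually (g := fun i => 3/2 * ‖f i - 1‖)
          (h.mul_left _)
        have := h.tendsto_cofinite_zero
        filter_upwards [this.eventually_le_const (by norm_num : (0:ℝ) < 1/2)] with i hi
        calc ‖Complex.log (f i)‖ = ‖Complex.log (1 + (f i - 1))‖ := by ring_nf
          _ ≤ 3/2 * ‖f i - 1‖ := Complex.norm_log_one_add_half_le_self hi)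

lemma term_bound (p : Nat.Primes) {z : ℂ} {t : ℝ} (ht : t ≤ z.re) :
    ‖1 / ((p : ℂ) ^ z * (1 + 1 / (p : ℂ)))‖ ≤ (p : ℝ) ^ (-t) := by
  have hp2 : 2 ≤ (p : ℕ) := p.prop.two_le
  have hp0 : (0:ℝ) < ((p : ℕ) : ℝ) := by exact_mod_cast p.prop.pos
  have hp1 : (1:ℝ) ≤ ((p : ℕ) : ℝ) := by exact_mod_cast Nat.one_le_iff_ne_zero.mpr (by omega)
  have h1 : ‖(p : ℂ) ^ z‖ = ((p : ℕ) : ℝ) ^ z.re := norm_natCast_cpow_of_pos (by omega) z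
  have h2 : (1:ℝ) ≤ ‖1 + 1 / (p : ℂ)‖ := by
    have he : (1 : ℂ) + 1 / (p : ℂ) = (((1 + 1 / (p : ℕ) : ℝ)) : ℂ) := by push_cast; ring
    rw [he, Complex.norm_real, Real.norm_eq_abs, _root_.abs_of_nonneg (by positivity)]
    have : (0:ℝ) ≤ 1 / ((p : ℕ) : ℝ) := by positivity
    linarith
  have ht' : ((p : ℕ) : ℝ) ^ t ≤ ((p : ℕ) : ℝ) ^ z.re :=
    Real.rpow_le_rpow_of_exponent_le hp1 ht
  rw [norm_div, norm_one, norm_mul, h1, Real.rpow_neg hp0.le, ← one_div]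
  apply one_div_le_one_div_of_le (by positivity)
  nlinarith [Real.rpow_pos_of_pos hp0 t, Real.rpow_pos_of_pos hp0 z.re]

lemma hn_product_key (n : ℕ) (hn : 1 ≤ n) (s : ℂ)
    (hs : -1 + (2 : ℝ) ^ (-(n : ℝ)) < s.re) :
    Summable (fun p : Nat.Primes => ‖hFactor n s p - 1‖) := by
  set σ := s.re with hσdef
  have h2n : (2:ℝ) ^ (-(n:ℝ)) = ((2:ℝ) ^ n)⁻¹ := by
    rw [← Real.rpow_natCast 2 n, ← Real.rpow_neg (by norm_num)]
  have h2npos : (0:ℝ) < (2:ℝ) ^ n := by positivity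
  have hσ1 : 0 < σ + 1 := by
    have : (0:ℝ) < (2:ℝ) ^ (-(n:ℝ)) := by positivity
    linarith
  set t := min (σ + 2) ((2:ℝ) ^ n * (σ + 1)) with htdef
  have ht1 : 1 < t := by
    apply lt_min (by linarith)
    have := mul_lt_mul_of_pos_left (show (2:ℝ) ^ (-(n:ℝ)) < σ + 1 by linarith) h2npos
    rwa [h2n, mul_inv_cancel₀ h2npos.ne'] at this
  have hsum : Summable (fun p : Nat.Primes => (2:ℝ) ^ n * ((p : ℕ) : ℝ) ^ (-t)) :=
    (Nat.Primes.summable_rpow.mpr (by linarith)).mul_left _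
  apply hsum.of_nonneg_of_le (fun _ => norm_nonneg _)
  intro p
  have hbig : ‖1 / ((p : ℂ) ^ ((2 : ℂ) ^ n * s + (2 : ℂ) ^ n) * (1 + 1 / (p : ℂ)))‖
      ≤ ((p : ℕ) : ℝ) ^ (-t) := by
    apply term_bound
    have : ((2 : ℂ) ^ n * s + (2 : ℂ) ^ n).re = (2:ℝ) ^ n * σ + (2:ℝ) ^ n := by
      have h2c : (2 : ℂ) ^ n = (((2:ℝ) ^ n : ℝ) : ℂ) := by push_cast; ring
      rw [h2c, Complex.add_re, Complex.mul_re, Complex.ofReal_re, Complex.ofReal_im]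
      ring
    rw [this]
    have := min_le_right (σ + 2) ((2:ℝ) ^ n * (σ + 1))
    rw [← htdef] at this
    nlinarith
  have hsmall : ∀ m ∈ Finset.Icc 1 (2 ^ n - 1 : ℕ),
      ‖1 / ((p : ℂ) ^ ((m : ℂ) * s + (m : ℂ) + 1) * (1 + 1 / (p : ℂ)))‖
        ≤ ((p : ℕ) : ℝ) ^ (-t) := by
    intro m hm
    apply term_bound
    have hm1 : 1 ≤ m := (Finset.mem_Icc.mp hm).1
    have hre : ((m : ℂ) * s + (m : ℂ) + 1).re = (m:ℝ) * σ + (m:ℝ) + 1 := by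
      simp [Complex.add_re, Complex.mul_re]
      exact Or.inl hσdef.symm
    rw [hre]
    have h1m : (1:ℝ) ≤ (m:ℝ) := by exact_mod_cast hm1
    have := min_le_left (σ + 2) ((2:ℝ) ^ n * (σ + 1))
    rw [← htdef] at this
    nlinarith
  calc ‖hFactor n s p - 1‖
      ≤ ‖∑ m ∈ Finset.Icc 1 (2 ^ n - 1 : ℕ),
          1 / ((p : ℂ) ^ ((m : ℂ) * s + (m : ℂ) + 1) * (1 + 1 / (p : ℂ)))‖
        + ‖1 / ((p : ℂ) ^ ((2 : ℂ) ^ n * s + (2 : ℂ) ^ n) * (1 + 1 / (p : ℂ)))‖ := by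
        have heq : hFactor n s p - 1 =
            (∑ m ∈ Finset.Icc 1 (2 ^ n - 1 : ℕ),
              1 / ((p : ℂ) ^ ((m : ℂ) * s + (m : ℂ) + 1) * (1 + 1 / (p : ℂ))))
            - 1 / ((p : ℂ) ^ ((2 : ℂ) ^ n * s + (2 : ℂ) ^ n) * (1 + 1 / (p : ℂ))) := by
          rw [hFactor]; ring
        rw [heq]
        exact norm_sub_le _ _
    _ ≤ (Finset.Icc 1 (2 ^ n - 1 : ℕ)).card * ((p : ℕ) : ℝ) ^ (-t)
        + ((p : ℕ) : ℝ) ^ (-t) := by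
        gcongr
        calc ‖∑ m ∈ Finset.Icc 1 (2 ^ n - 1 : ℕ),
              1 / ((p : ℂ) ^ ((m : ℂ) * s + (m : ℂ) + 1) * (1 + 1 / (p : ℂ)))‖
            ≤ ∑ _ ∈ Finset.Icc 1 (2 ^ n - 1 : ℕ), ((p : ℕ) : ℝ) ^ (-t) :=
              norm_sum_le_of_le _ hsmall
          _ = (Finset.Icc 1 (2 ^ n - 1 : ℕ)).card * ((p : ℕ) : ℝ) ^ (-t) := by
              rw [Finset.sum_const, nsmul_eq_mul]
    _ ≤ (2:ℝ) ^ n * ((p : ℕ) : ℝ) ^ (-t) := by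
        have hcard : (Finset.Icc 1 (2 ^ n - 1 : ℕ)).card = 2 ^ n - 1 := by
          rw [Nat.card_Icc]; omega
        rw [hcard]
        have h1 : 1 ≤ 2 ^ n := Nat.one_le_two_pow
        have : ((2 ^ n - 1 : ℕ) : ℝ) = (2:ℝ) ^ n - 1 := by
          push_cast [h1]; ring
        rw [this]
        have hppos : (0:ℝ) < ((p:ℕ):ℝ) ^ (-t) :=
          Real.rpow_pos_of_pos (by exact_mod_cast p.prop.pos) _
        nlinarith

theorem hn_product_converges (n : ℕ) (hn : 1 ≤ n) (s : ℂ)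
    (hs : -1 + (2 : ℝ) ^ (-(n : ℝ)) < s.re) :
    Summable (fun p : Nat.Primes => ‖hFactor n s p - 1‖) ∧
      Multipliable (fun p : Nat.Primes => hFactor n s p) := by
  have S := hn_product_key n hn s hs
  exact ⟨S, multipliable_of_summable_norm_sub_one S⟩
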